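/- Let (Ω, 𝔉, P) be a probability space and n ≥ 1. For each t ∈ ℕ let F_t : Ω × ℝⁿ → ℝ be such that β ↦ F_t(ω, β) is convex for every ω and ω ↦ F_t(ω, β) is measurable for every β. Let f : ℝⁿ → ℝ be convex, and suppose that for every β ∈ ℝⁿ, F_t(·, β) → f(β) in probability as t → ∞. Then for every compact set K ⊆ ℝⁿ and every ε > 0, P( sup_{β ∈ K} |F_t(·, β) − f(β)| > ε ) → 0 as t → ∞. -/

import Mathlib

open MeasureTheory Filter Set Metric

/-- Deterministic convexity lemma: uniform closeness on a compact set is implied by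
closeness on a suitable finite grid. -/
lemma det_lemma {n : ℕ} (f : (Fin n → ℝ) → ℝ) (hf : ConvexOn ℝ Set.univ f)
    (K : Set (Fin n → ℝ)) (hK : IsCompact K) {ε : ℝ} (hε : 0 < ε) :
    ∃ (S : Set (Fin n → ℝ)) (δ : ℝ), S.Finite ∧ 0 < δ ∧
      ∀ g : (Fin n → ℝ) → ℝ, ConvexOn ℝ Set.univ g →
        (∀ v ∈ S, |g v - f v| ≤ δ) → ∀ β ∈ K, |g β - f β| < ε := by
  -- bound K
  obtain ⟨r, hrK⟩ := hK.isBounded.subset_closedBall 0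
  set R : ℝ := max r 0 with hR
  have hR0 : 0 ≤ R := le_max_right _ _
  have hRK : K ⊆ closedBall 0 R := hrK.trans (closedBall_subset_closedBall (le_max_left _ _))
  -- continuity of f
  have hfc : Continuous f := continuousOn_univ.mp (hf.continuousOn isOpen_univ)
  -- uniform continuity on a large ball
  have hCcomp : IsCompact (closedBall (0 : Fin n → ℝ) (R + 5)) := isCompact_closedBall _ _
  have huc := hCcomp.uniformContinuousOn_of_continuous hfc.continuousOn
  rw [Metric.uniformContinuousOn_iff] at huc
  obtain ⟨δ₀, hδ₀pos, hδ₀⟩ := huc (ε / 8) (by positivity)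
  set h : ℝ := min (δ₀ / 3) 1 with hhdef
  have hh : 0 < h := lt_min (by linarith) one_pos
  have hh1 : h ≤ 1 := min_le_right _ _
  have hhδ : 2 * h < δ₀ := by
    have : h ≤ δ₀ / 3 := min_le_left _ _
    linarith
  set m : ℤ := ⌈(R + 5) / h⌉ with hm
  have hmh : R + 5 ≤ (m : ℝ) * h := by
    have := Int.le_ceil ((R + 5) / h)
    calc R + 5 = (R + 5) / h * h := by field_simp
    _ ≤ (m : ℝ) * h := by nlinarith
  set S : Set (Fin n → ℝ) :=
    (fun (k : Fin n → ℤ) => fun i => (k i : ℝ) * h) ''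
      (Set.pi Set.univ fun _ => Set.Icc (-m) m) with hSdef
  have hSfin : S.Finite := (Set.Finite.pi fun _ => Set.finite_Icc _ _).image _
  have hmemS : ∀ (k : Fin n → ℤ), (∀ i, |(k i : ℝ) * h| ≤ R + 5) →
      (fun i => (k i : ℝ) * h) ∈ S := by
    intro k hk
    refine ⟨k, fun i _ => ?_, rfl⟩
    have h1 : |(k i : ℝ)| * h ≤ (m : ℝ) * h := by
      calc |(k i : ℝ)| * h = |(k i : ℝ) * h| := by rw [abs_mul, abs_of_pos hh]
      _ ≤ R + 5 := hk i
      _ ≤ (m : ℝ) * h := hmh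
    have h2 : |(k i : ℝ)| ≤ (m : ℝ) := le_of_mul_le_mul_right h1 hh
    have h3 : |k i| ≤ m := by exact_mod_cast (by push_cast; exact h2 : (|k i| : ℝ) ≤ (m : ℝ))
    exact Set.mem_Icc.mpr (abs_le.mp h3)
  -- floor grid facts
  have hfloor : ∀ x : ℝ, (⌊x / h⌋ : ℝ) * h ≤ x ∧ x < ((⌊x / h⌋ : ℝ) + 1) * h := by
    intro x
    constructor
    · have := Int.floor_le (x / h)
      calc (⌊x / h⌋ : ℝ) * h ≤ x / h * h := by nlinarith
      _ = x := by field_simp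
    · have := Int.lt_floor_add_one (x / h)
      calc x = x / h * h := by field_simp
      _ < ((⌊x / h⌋ : ℝ) + 1) * h := by nlinarith
  refine ⟨S, ε / 8, hSfin, by positivity, ?_⟩
  -- upper bound claim
  have hU : ∀ g : (Fin n → ℝ) → ℝ, ConvexOn ℝ Set.univ g →
      (∀ v ∈ S, |g v - f v| ≤ ε / 8) → ∀ β : Fin n → ℝ, ‖β‖ ≤ R + 3 →
      g β ≤ f β + ε / 8 + ε / 8 := by
    intro g hg hgS β hβ
    set a : Fin n → ℝ := fun i => (⌊β i / h⌋ : ℝ) * h with ha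
    set V : Set (Fin n → ℝ) := Set.pi Set.univ (fun i => ({a i, a i + h} : Set ℝ)) with hV
    have hβV : β ∈ convexHull ℝ V := by
      rw [hV, convexHull_pi]
      intro i _
      show β i ∈ convexHull ℝ ({a i, a i + h} : Set ℝ)
      rw [convexHull_pair, segment_eq_Icc (by linarith [hh.le] : a i ≤ a i + h)]
      exact ⟨(hfloor (β i)).1, by have := (hfloor (β i)).2; simp only [ha]; linarith⟩
    obtain ⟨v, hvV, hgv⟩ := hg.exists_ge_of_mem_convexHull (Set.subset_univ V) hβV
    have hvi : ∀ i, v i = a i ∨ v i = a i + h := fun i => hvV i (Set.mem_univ i)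
    have hvd : ∀ i, |v i - β i| ≤ h := by
      intro i
      have h1 := (hfloor (β i)).1
      have h2 := (hfloor (β i)).2
      rcases hvi i with hv | hv <;> rw [hv] <;> rw [abs_le] <;>
        constructor <;> simp only [ha] at * <;> linarith
    have hdvβ : dist v β ≤ h := by
      rw [dist_pi_le_iff hh.le]
      intro i
      rw [Real.dist_eq]
      exact hvd i
    have hnb : ∀ i, |β i| ≤ R + 3 := fun i => (norm_le_pi_norm β i).trans hβ
    have hnv : ‖v‖ ≤ R + 4 := by
      calc ‖v‖ = dist v 0 := (dist_zero_right v).symm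
      _ ≤ dist v β + dist β 0 := dist_triangle _ _ _
      _ ≤ h + (R + 3) := by rw [dist_zero_right]; exact add_le_add hdvβ hβ
      _ ≤ R + 4 := by linarith
    have hvS : v ∈ S := by
      set k : Fin n → ℤ := fun i => if v i = a i then ⌊β i / h⌋ else ⌊β i / h⌋ + 1 with hk
      have hvk : v = fun i => (k i : ℝ) * h := by
        funext i
        simp only [hk]
        split_ifs with hc
        · rw [hc]
        · rcases hvi i with hv | hv
          · exact absurd hv hc
          · rw [hv]; simp only [ha]; push_cast; ring
      rw [hvk]
      refine hmemS k fun i => ?_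
      have : |(k i : ℝ) * h| = |v i| := by rw [hvk]
      rw [this]
      exact (norm_le_pi_norm v i).trans (by linarith)
    have hfvβ : |f v - f β| < ε / 8 := by
      have := hδ₀ v (by simpa [mem_closedBall, dist_zero_right] using by linarith : v ∈ closedBall 0 (R + 5))
        β (by simp [mem_closedBall, dist_zero_right]; linarith)
        (lt_of_le_of_lt hdvβ (by linarith))
      rwa [Real.dist_eq] at this
    have := abs_le.mp (hgS v hvS)
    have := abs_lt.mp hfvβ
    linarith
  -- main bound
  intro g hg hgS β hβK
  have hβR : ‖β‖ ≤ R := by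
    have := hRK hβK
    rwa [mem_closedBall, dist_zero_right] at this
  set v : Fin n → ℝ := fun i => (⌊β i / h⌋ : ℝ) * h with hv
  have hvd : ∀ i, |v i - β i| ≤ h := by
    intro i
    have h1 := (hfloor (β i)).1
    have h2 := (hfloor (β i)).2
    rw [abs_le]; constructor <;> simp only [hv] <;> linarith
  have hdvβ : dist v β ≤ h := by
    rw [dist_pi_le_iff hh.le]; intro i; rw [Real.dist_eq]; exact hvd i
  have hvS : v ∈ S := by
    refine hmemS (fun i => ⌊β i / h⌋) fun i => ?_
    have h1 : |(⌊β i / h⌋ : ℝ) * h| ≤ |β i| + h := by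
      have := hvd i
      simp only [hv] at this
      have := abs_le.mp this
      rw [abs_le]
      have := abs_le.mp (le_refl |β i|)
      constructor <;> cases' (abs_le.mp (le_refl |β i|)) with l r <;> linarith [neg_abs_le (β i), le_abs_self (β i)]
    calc |(⌊β i / h⌋ : ℝ) * h| ≤ |β i| + h := h1
    _ ≤ R + 5 := by have := (norm_le_pi_norm β i).trans hβR; rw [Real.norm_eq_abs] at this; linarith
  set w : Fin n → ℝ := fun i => 2 * v i - β i with hw
  have hwd : ∀ i, |w i - β i| ≤ 2 * h := by
    intro i
    have := hvd i
    simp only [hw]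
    have : |2 * v i - β i - β i| = 2 * |v i - β i| := by
      rw [show 2 * v i - β i - β i = 2 * (v i - β i) by ring, abs_mul]
      norm_num
    rw [this]
    linarith [hvd i]
  have hdwβ : dist w β ≤ 2 * h := by
    rw [dist_pi_le_iff (by linarith)]; intro i; rw [Real.dist_eq]; exact hwd i
  have hnw : ‖w‖ ≤ R + 2 := by
    calc ‖w‖ = dist w 0 := (dist_zero_right w).symm
    _ ≤ dist w β + dist β 0 := dist_triangle _ _ _
    _ ≤ 2 * h + R := by rw [dist_zero_right]; exact add_le_add hdwβ hβR
    _ ≤ R + 2 := by linarith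
  -- midpoint inequality : g v ≤ (g β + g w) / 2
  have hmid : g v ≤ (1 / 2 : ℝ) * g β + (1 / 2 : ℝ) * g w := by
    have key := hg.2 (Set.mem_univ β) (Set.mem_univ w)
      (by norm_num : (0:ℝ) ≤ 1/2) (by norm_num : (0:ℝ) ≤ 1/2) (by norm_num)
    have heq : (1/2 : ℝ) • β + (1/2 : ℝ) • w = v := by
      funext i
      simp only [Pi.add_apply, Pi.smul_apply, smul_eq_mul, hw]
      ring
    rwa [heq] at key
  -- bounds
  have hgβU : g β ≤ f β + ε / 8 + ε / 8 := hU g hg hgS β (by linarith)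
  have hgwU : g w ≤ f w + ε / 8 + ε / 8 := hU g hg hgS w (by linarith)
  have hgvL : f v - ε / 8 ≤ g v := by linarith [(abs_le.mp (hgS v hvS)).2, (abs_le.mp (hgS v hvS)).1]
  have hβC : β ∈ closedBall (0 : Fin n → ℝ) (R + 5) := by
    rw [mem_closedBall, dist_zero_right]; linarith
  have hvC : v ∈ closedBall (0 : Fin n → ℝ) (R + 5) := by
    rw [mem_closedBall, dist_zero_right]
    calc ‖v‖ = dist v 0 := (dist_zero_right v).symm
    _ ≤ dist v β + dist β 0 := dist_triangle _ _ _
    _ ≤ h + R := by rw [dist_zero_right]; exact add_le_add hdvβ hβR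
    _ ≤ R + 5 := by linarith
  have hwC : w ∈ closedBall (0 : Fin n → ℝ) (R + 5) := by
    rw [mem_closedBall, dist_zero_right]; linarith
  have hfv : |f v - f β| < ε / 8 := by
    have := hδ₀ v hvC β hβC (lt_of_le_of_lt hdvβ (by linarith))
    rwa [Real.dist_eq] at this
  have hfw : |f w - f β| < ε / 8 := by
    have := hδ₀ w hwC β hβC (lt_of_le_of_lt hdwβ (by linarith))
    rwa [Real.dist_eq] at this
  have h1 := abs_lt.mp hfv
  have h2 := abs_lt.mp hfw
  rw [abs_lt]
  constructor <;> linarith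


/-- Convexity lemma: if random convex functions `F_t(ω, ·)` converge
pointwise in probability to a convex function `f`, then the convergence is uniform in
probability on every compact set: `P(sup_{β ∈ K} |F_t − f| > ε) → 0`. -/
theorem stmt16 {n : ℕ} (hn : 1 ≤ n)
    {Ω : Type*} [MeasurableSpace Ω] (P : Measure Ω) [IsProbabilityMeasure P]
    (F : ℕ → Ω → (Fin n → ℝ) → ℝ)
    (hconv : ∀ t ω, ConvexOn ℝ Set.univ (F t ω))
    (hmeas : ∀ t (β : Fin n → ℝ), Measurable (fun ω => F t ω β))
    (f : (Fin n → ℝ) → ℝ) (hf : ConvexOn ℝ Set.univ f)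
    (hpt : ∀ β : Fin n → ℝ, ∀ ε : ℝ, 0 < ε →
      Tendsto (fun t : ℕ => P {ω | ε ≤ |F t ω β - f β|}) atTop (nhds 0)) :
    ∀ K : Set (Fin n → ℝ), IsCompact K → ∀ ε : ℝ, 0 < ε →
      Tendsto (fun t : ℕ => P {ω | ∃ β ∈ K, ε < |F t ω β - f β|}) atTop (nhds 0) := by
  intro K hK ε hε
  obtain ⟨S, δ, hSfin, hδpos, hdet⟩ := det_lemma f hf K hK hε
  have hsub : ∀ t, {ω | ∃ β ∈ K, ε < |F t ω β - f β|} ⊆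
      ⋃ v ∈ hSfin.toFinset, {ω | δ ≤ |F t ω v - f v|} := by
    intro t ω hω
    obtain ⟨β, hβ, hβε⟩ := hω
    by_contra hc
    simp only [Set.mem_iUnion, Set.mem_setOf_eq, not_exists, not_le] at hc
    have hall : ∀ v ∈ S, |F t ω v - f v| ≤ δ := by
      intro v hv
      exact (hc v (hSfin.mem_toFinset.mpr hv)).le
    have := hdet (F t ω) (hconv t ω) hall β hβ
    linarith
  have hbound : ∀ t, P {ω | ∃ β ∈ K, ε < |F t ω β - f β|} ≤
      ∑ v ∈ hSfin.toFinset, P {ω | δ ≤ |F t ω v - f v|} := fun t =>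
    (measure_mono (hsub t)).trans (measure_biUnion_finset_le _ _)
  have hsum : Tendsto (fun t => ∑ v ∈ hSfin.toFinset, P {ω | δ ≤ |F t ω v - f v|})
      atTop (nhds 0) := by
    have := tendsto_finset_sum (hSfin.toFinset) (fun v _ => hpt v δ hδpos)
    simpa using this
  exact tendsto_of_tendsto_of_tendsto_of_le_of_le tendsto_const_nhds hsum
    (fun t => zero_le) hbound
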